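/- Let (L, d, [·,·]) be a dgla with a decomposition L = A ⊕ X of graded subspaces satisfying [A,A] = 0, [X,X] ⊆ X, [X,A] ⊆ A, d(A) ⊆ X, d(X) = 0. Let (q, Q) ∈ A¹ × X¹ be such that q + Q is a Maurer–Cartan element, and let b ∈ A⁰. Then the gauge-transformed element (q', Q') with Q' := Q − db and q' := q + [b, Q] − (1/2)[b, db] is again a Maurer–Cartan element, i.e. dq' + (1/2)[Q',Q'] = 0 and [Q',q'] = 0. -/
import Mathlib


/-- In a dgla with a splitting `L = A ⊕ X` as in Statement 1,
if `(q, Q) ∈ A¹ × X¹` is Maurer–Cartan and `b ∈ A⁰`, then the gauge transform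
`Q' = Q − db`, `q' = q + [b,Q] − (1/2)[b,db]` is again Maurer–Cartan:
`dq' + (1/2)[Q',Q'] = 0` and `[Q',q'] = 0`. -/
theorem gauge_transform_maurer_cartan
    {L : Type} [AddCommGroup L] [Module ℝ L]
    (grade : ℤ → Submodule ℝ L)
    (hdec : DirectSum.IsInternal grade)
    (d : L →ₗ[ℝ] L) (bk : L →ₗ[ℝ] L →ₗ[ℝ] L)
    (hgrd : ∀ (i : ℤ), ∀ x ∈ grade i, d x ∈ grade (i + 1))
    (hd2 : ∀ a, d (d a) = 0)
    (hgrb : ∀ (i j : ℤ), ∀ x ∈ grade i, ∀ y ∈ grade j, bk x y ∈ grade (i + j))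
    (hanti : ∀ (i j : ℤ), ∀ x ∈ grade i, ∀ y ∈ grade j,
      bk x y = -(((-1 : ℝ) ^ (i * j)) • bk y x))
    (hjac : ∀ (i j : ℤ), ∀ x ∈ grade i, ∀ y ∈ grade j, ∀ z,
      bk x (bk y z) = bk (bk x y) z + ((-1 : ℝ) ^ (i * j)) • bk y (bk x z))
    (hleib : ∀ (i : ℤ), ∀ x ∈ grade i, ∀ y,
      d (bk x y) = bk (d x) y + ((-1 : ℝ) ^ i) • bk x (d y))
    (A X : Submodule ℝ L)
    (hcompl : IsCompl A X)
    (hgraded : ∀ (i : ℤ), ∀ x ∈ grade i,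
      ∃ a ∈ A ⊓ grade i, ∃ b ∈ X ⊓ grade i, x = a + b)
    (hAA : ∀ a ∈ A, ∀ a' ∈ A, bk a a' = 0)
    (hXX : ∀ x ∈ X, ∀ y ∈ X, bk x y ∈ X)
    (hXA : ∀ x ∈ X, ∀ a ∈ A, bk x a ∈ A)
    (hdA : ∀ a ∈ A, d a ∈ X)
    (hdX : ∀ x ∈ X, d x = 0)
    (q Q : L) (hqA : q ∈ A) (hq1 : q ∈ grade 1)
    (hQX : Q ∈ X) (hQ1 : Q ∈ grade 1)
    -- (q, Q) is Maurer–Cartan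
    (hMC1 : d q + (1 / 2 : ℝ) • bk Q Q = 0)
    (hMC2 : bk Q q = 0)
    (b : L) (hbA : b ∈ A) (hb0 : b ∈ grade 0) :
    d (q + bk b Q - (1 / 2 : ℝ) • bk b (d b))
        + (1 / 2 : ℝ) • bk (Q - d b) (Q - d b) = 0
      ∧ bk (Q - d b) (q + bk b Q - (1 / 2 : ℝ) • bk b (d b)) = 0 := by

  have hdbX : d b ∈ X := hdA b hbA
  have hdb1 : d b ∈ grade 1 := by simpa using hgrd 0 b hb0
  have hdQ : d Q = 0 := hdX Q hQX
  have hddb : d (d b) = 0 := hd2 b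
  have hQb_A : bk Q b ∈ A := hXA Q hQX b hbA
  have hbQ : bk b Q = - bk Q b := by simpa using hanti 0 1 b hb0 Q hQ1
  have hQb_eq : bk Q b = - bk b Q := by rw [hbQ, neg_neg]
  have hbQ_A : bk b Q ∈ A := by rw [hbQ]; exact neg_mem hQb_A
  have hbQ1 : bk b Q ∈ grade 1 := by simpa using hgrb 0 1 b hb0 Q hQ1
  have hQb1 : bk Q b ∈ grade 1 := by simpa using hgrb 1 0 Q hQ1 b hb0
  have hdbbA : bk (d b) b ∈ A := hXA _ hdbX b hbA
  have hbdb : bk b (d b) = - bk (d b) b := by simpa using hanti 0 1 b hb0 (d b) hdb1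
  have hdbb_eq : bk (d b) b = - bk b (d b) := by rw [hbdb, neg_neg]
  have hbdb_A : bk b (d b) ∈ A := by rw [hbdb]; exact neg_mem hdbbA
  have hbdb1 : bk b (d b) ∈ grade 1 := by simpa using hgrb 0 1 b hb0 (d b) hdb1
  have hQdb : bk Q (d b) = bk (d b) Q := by
    have h := hanti 1 1 Q hQ1 (d b) hdb1
    norm_num at h; exact h
  -- Leibniz facts
  have L1 : d (bk b Q) = bk (d b) Q := by
    have h := hleib 0 b hb0 Q
    rw [hdQ] at h; simpa using h
  have L2 : d (bk b (d b)) = bk (d b) (d b) := by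
    have h := hleib 0 b hb0 (d b)
    rw [hddb] at h; simpa using h
  have L3 : bk (d b) q + bk b (d q) = 0 := by
    have h := hleib 0 b hb0 q
    rw [hAA b hbA q hqA, map_zero] at h
    simpa using h.symm
  have L4 : bk (d b) (bk b Q) + bk b (bk (d b) Q) = 0 := by
    have h := hleib 0 b hb0 (bk b Q)
    rw [hAA b hbA _ hbQ_A, map_zero, L1] at h
    simpa using h.symm
  have L5 : bk (d b) (bk b (d b)) + bk b (bk (d b) (d b)) = 0 := by
    have h := hleib 0 b hb0 (bk b (d b))
    rw [hAA b hbA _ hbdb_A, map_zero, L2] at h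
    simpa using h.symm
  -- consequences of Maurer-Cartan
  have hdq_eq : d q = -((1 / 2 : ℝ) • bk Q Q) := eq_neg_of_add_eq_zero_left hMC1
  have hQQeq : bk Q Q = (-2 : ℝ) • d q := by
    rw [hdq_eq]; module
  have hbdq : bk b (d q) = - bk (d b) q := eq_neg_of_add_eq_zero_right L3
  have hbQQ : bk b (bk Q Q) = (2 : ℝ) • bk (d b) q := by
    rw [hQQeq, map_smul, hbdq]; module
  -- Jacobi facts
  have hQbQ : bk (bk Q b) Q = - bk Q (bk b Q) := by
    have h := hanti 1 1 (bk Q b) hQb1 Q hQ1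
    norm_num at h
    rw [h, hQb_eq, map_neg]
  have T1 : bk Q (bk b Q) = bk (d b) q := by
    have h : bk Q (bk b Q) = bk (bk Q b) Q + ((-1 : ℝ) ^ ((1 : ℤ) * 0)) • bk b (bk Q Q) :=
      hjac 1 0 Q hQ1 b hb0 Q
    norm_num [hQbQ, hbQQ] at h
    apply smul_right_injective L (two_ne_zero (α := ℝ))
    simp only [two_smul]
    nth_rw 1 [h]
    module
  have hQbdb : bk (bk Q b) (d b) = - bk (d b) (bk b Q) := by
    have h := hanti 1 1 (bk Q b) hQb1 (d b) hdb1
    norm_num at h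
    rw [h, hQb_eq, map_neg]
  have hu : bk b (bk (d b) Q) = - bk (d b) (bk b Q) := eq_neg_of_add_eq_zero_right L4
  have T2 : bk Q (bk b (d b)) = (-2 : ℝ) • bk (d b) (bk b Q) := by
    have h : bk Q (bk b (d b)) = bk (bk Q b) (d b) + ((-1 : ℝ) ^ ((1 : ℤ) * 0)) • bk b (bk Q (d b)) :=
      hjac 1 0 Q hQ1 b hb0 (d b)
    rw [hQdb] at h
    norm_num [hQbdb, hu] at h
    rw [h]; module
  -- [db,[b,db]] = 0 and [b,[db,db]] = 0
  have hswap : bk (bk b (d b)) (d b) = bk (d b) (bk b (d b)) := by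
    have h := hanti 1 1 (bk b (d b)) hbdb1 (d b) hdb1
    norm_num at h; exact h
  have hw : bk b (bk (d b) (d b)) = - bk (d b) (bk b (d b)) := eq_neg_of_add_eq_zero_right L5
  have hv2 : bk (d b) (bk b (d b)) = 0 := by
    have h : bk (d b) (bk b (d b)) = bk (bk (d b) b) (d b) + ((-1 : ℝ) ^ ((1 : ℤ) * 0)) • bk b (bk (d b) (d b)) :=
      hjac 1 0 (d b) hdb1 b hb0 (d b)
    rw [hdbb_eq, map_neg, LinearMap.neg_apply, hswap, hw] at h
    norm_num at h
    have h4 := sub_eq_zero_of_eq h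
    have h3 : (3 : ℝ) • bk (d b) (bk b (d b)) = 0 := by rw [← h4]; module
    apply smul_right_injective L (by norm_num : (3 : ℝ) ≠ 0)
    simpa using h3
  have hw0 : bk b (bk (d b) (d b)) = 0 := by rw [hw, hv2, neg_zero]
  constructor
  · simp only [map_add, map_sub, map_smul, LinearMap.sub_apply, LinearMap.add_apply,
      LinearMap.smul_apply]
    rw [L1, L2, hdq_eq, hQdb]
    module
  · simp only [map_add, map_sub, map_smul, LinearMap.sub_apply, LinearMap.add_apply,
      LinearMap.smul_apply]
    rw [hMC2, T1, T2, hv2]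
    module
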